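/- Let k be a field, let m >= 1, and let f ∈ k[x,y] be a polynomial lying in the m-th power of the ideal (x-1, y-1) of k[x,y]. If the degree of f in the variable x is strictly less than m, then (1-y) divides f. -/

import Mathlib

open MvPolynomial

theorem stmt4 (k : Type*) [Field k] (m : ℕ) (hm : 1 ≤ m)
    (f : MvPolynomial (Fin 2) k)
    (hf : f ∈ (Ideal.span {X 0 - 1, X 1 - 1} : Ideal (MvPolynomial (Fin 2) k)) ^ m)
    (hdeg : f.degreeOf 0 < m) :
    (1 - X 1 : MvPolynomial (Fin 2) k) ∣ f := by
  set ψ : MvPolynomial (Fin 2) k →ₐ[k] Polynomial k :=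
    aeval (fun i => if i = 0 then Polynomial.X else 1) with hψdef
  -- Step 1: ψ f = 0
  have hdvd : (Polynomial.X - 1 : Polynomial k) ^ m ∣ ψ f := by
    have h1 : ψ f ∈ Ideal.map ψ.toRingHom
        ((Ideal.span {X 0 - 1, X 1 - 1} : Ideal (MvPolynomial (Fin 2) k)) ^ m) :=
      Ideal.mem_map_of_mem _ hf
    rw [Ideal.map_pow, Ideal.map_span] at h1
    have himg : ψ.toRingHom '' {X 0 - 1, X 1 - 1} = {Polynomial.X - 1, 0} := by
      simp [Set.image_pair, hψdef]
    rw [himg] at h1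
    have hsp : (Ideal.span {Polynomial.X - 1, 0} : Ideal (Polynomial k)) =
        Ideal.span {Polynomial.X - 1} := by
      rw [Set.pair_comm, Ideal.span, Submodule.span_insert_zero]
    rw [hsp, Ideal.span_singleton_pow, Ideal.mem_span_singleton] at h1
    exact h1
  have hdegψ : (ψ f).natDegree ≤ f.degreeOf 0 := by
    rw [hψdef, aeval_def, eval₂_eq']
    apply Polynomial.natDegree_sum_le_of_forall_le
    intro d hd
    refine le_trans Polynomial.natDegree_mul_le ?_
    have hprod : (∏ i : Fin 2, (if i = 0 then (Polynomial.X : Polynomial k) else 1) ^ d i) =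
        Polynomial.X ^ d 0 := by
      rw [Fin.prod_univ_two]; simp
    rw [hprod]
    have hle : d 0 ≤ f.degreeOf 0 := by
      rw [degreeOf_eq_sup]
      exact Finset.le_sup (f := fun m => m 0) hd
    simpa using hle
  have hψf : ψ f = 0 := by
    by_contra h
    have := Polynomial.natDegree_le_of_dvd hdvd h
    have h1 : (Polynomial.X - 1 : Polynomial k).natDegree = 1 := by
      simpa using Polynomial.natDegree_X_sub_C (1 : k)
    rw [Polynomial.natDegree_pow, h1, mul_one] at this
    omega
  -- Step 2: φ f = 0 where φ substitutes 1 for X 1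
  set φ : MvPolynomial (Fin 2) k →ₐ[k] MvPolynomial (Fin 2) k :=
    aeval (Function.update X 1 (1 : MvPolynomial (Fin 2) k)) with hφdef
  have hφψ : φ = (Polynomial.aeval (X 0 : MvPolynomial (Fin 2) k)).comp ψ := by
    apply MvPolynomial.algHom_ext
    intro i
    fin_cases i <;> simp [hφdef, hψdef, Function.update]
  have hφf : φ f = 0 := by
    rw [hφψ]
    simp [hψf]
  -- Step 3: (X 1 - 1) divides p - φ p for all p
  have key : ∀ p : MvPolynomial (Fin 2) k, (X 1 - 1 : MvPolynomial (Fin 2) k) ∣ p - φ p := by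
    intro p
    induction p using MvPolynomial.induction_on with
    | C a => simp [hφdef]
    | add p q hp hq =>
        have : p + q - φ (p + q) = (p - φ p) + (q - φ q) := by rw [map_add]; ring
        rw [this]; exact dvd_add hp hq
    | mul_X p i hp =>
        have : p * X i - φ (p * X i) = (p - φ p) * X i + φ p * (X i - φ (X i)) := by
          rw [map_mul]; ring
        rw [this]
        apply dvd_add (hp.mul_right _)
        apply Dvd.dvd.mul_left
        fin_cases i <;> simp [hφdef, Function.update]
  have := key f
  rw [hφf, sub_zero] at this
  rw [show (1 - X 1 : MvPolynomial (Fin 2) k) = -(X 1 - 1) by ring]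
  exact this.neg_left
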